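/- Lower bound on postselected swap fidelity: for ρ₁, ρ₂ ∈ S_{p,F}, the postselected fidelity after Bell outcome 00 satisfies F'₀₀(ρ₁⊗ρ₂) ≥ p(2F−p)/(1 + (1−p)²). More generally, for ρ_k ∈ S_{p_k,F_k}: F'₀₀ ≥ (p₁F₂ + p₂F₁ − p₁p₂)/(1 + (1−p₁)(1−p₂)). -/

import Mathlib

open Matrix Kronecker BigOperators ComplexOrder

noncomputable section

/-- Pauli X matrix. -/
def PX : Matrix (Fin 2) (Fin 2) ℂ := !![0, 1; 1, 0]

/-- Pauli Y matrix. -/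
def PY : Matrix (Fin 2) (Fin 2) ℂ := !![0, -Complex.I; Complex.I, 0]

/-- Pauli Z matrix. -/
def PZ : Matrix (Fin 2) (Fin 2) ℂ := !![1, 0; 0, -1]

/-- The maximally entangled two-qubit state (|00⟩+|11⟩)/√2, as a vector. -/
def bell00 : Fin 2 × Fin 2 → ℂ := fun p => if p.1 = p.2 then ((1 / Real.sqrt 2 : ℝ) : ℂ) else 0

/-- The Bell basis vector |Ψ_ij⟩ = (I ⊗ X^i Z^j)|Ψ₀₀⟩. -/
def bell (i j : Fin 2) : Fin 2 × Fin 2 → ℂ :=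
  (((1 : Matrix (Fin 2) (Fin 2) ℂ) ⊗ₖ (PX ^ (i : ℕ) * PZ ^ (j : ℕ)))).mulVec bell00

/-- The inner product ⟨φ|M|ψ⟩. -/
def braket2 {n : Type*} [Fintype n] (φ : n → ℂ) (M : Matrix n n ℂ) (ψ : n → ℂ) : ℂ :=
  star φ ⬝ᵥ M.mulVec ψ

/-- A density matrix: positive semidefinite with unit trace. -/
def IsDensity {n : Type*} [Fintype n] (ρ : Matrix n n ℂ) : Prop :=
  ρ.PosSemidef ∧ ρ.trace = 1

/-- The Bell-diagonal twirl B(ρ). -/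
def twirl (ρ : Matrix (Fin 2 × Fin 2) (Fin 2 × Fin 2) ℂ) :
    Matrix (Fin 2 × Fin 2) (Fin 2 × Fin 2) ℂ :=
  (1 / 4 : ℂ) • (ρ + (PX ⊗ₖ PX) * ρ * (PX ⊗ₖ PX)ᴴ + (PY ⊗ₖ PY) * ρ * (PY ⊗ₖ PY)ᴴ
    + (PZ ⊗ₖ PZ) * ρ * (PZ ⊗ₖ PZ)ᴴ)

/-- The Bell projector |Ψ_ij⟩⟨Ψ_ij|. -/
def bproj (i j : Fin 2) : Matrix (Fin 2 × Fin 2) (Fin 2 × Fin 2) ℂ :=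
  vecMulVec (bell i j) (star (bell i j))

/-- Partial inner product ⟨ψ|_{A₁A₂} M |ψ⟩_{A₁A₂} of a vector ψ on the middle registers
A₁,A₂ with an operator M on registers (B₁,A₁),(A₂,B₂), giving a matrix on B₁,B₂. -/
def swapProj (ψ : Fin 2 × Fin 2 → ℂ)
    (M : Matrix ((Fin 2 × Fin 2) × (Fin 2 × Fin 2)) ((Fin 2 × Fin 2) × (Fin 2 × Fin 2)) ℂ) :
    Matrix (Fin 2 × Fin 2) (Fin 2 × Fin 2) ℂ :=
  fun p q => ∑ a₁, ∑ a₂, ∑ a₁', ∑ a₂',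
    star (ψ (a₁, a₂)) * M ((p.1, a₁), (a₂, p.2)) ((q.1, a₁'), (a₂', q.2)) * ψ (a₁', a₂')

/-- The probability of Bell-measurement outcome ij on the middle registers:
p'_ij(M) = Tr[|Ψ_ij⟩⟨Ψ_ij|_{A₁A₂} M]. -/
def swapProb (i j : Fin 2)
    (M : Matrix ((Fin 2 × Fin 2) × (Fin 2 × Fin 2)) ((Fin 2 × Fin 2) × (Fin 2 × Fin 2)) ℂ) : ℂ :=
  (swapProj (bell i j) M).trace

/-- Tr[|Ψ_ij⟩⟨Ψ_ij|_{B₁B₂} |Ψ_ij⟩⟨Ψ_ij|_{A₁A₂} M]. -/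
def swapNum (i j : Fin 2)
    (M : Matrix ((Fin 2 × Fin 2) × (Fin 2 × Fin 2)) ((Fin 2 × Fin 2) × (Fin 2 × Fin 2)) ℂ) : ℂ :=
  braket2 (bell i j) (swapProj (bell i j) M) (bell i j)

/-- The postselected end-to-end fidelity F'_ij. -/
def swapFid (i j : Fin 2)
    (M : Matrix ((Fin 2 × Fin 2) × (Fin 2 × Fin 2)) ((Fin 2 × Fin 2) × (Fin 2 × Fin 2)) ℂ) : ℂ :=
  swapNum i j M / swapProb i j M

/-- The family S_{p,F}: two-qubit states of the form p|Ψ₀₀⟩⟨Ψ₀₀| + (1−p)σ for some density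
matrix σ, with fidelity ⟨Ψ₀₀|ρ|Ψ₀₀⟩ = F. -/
def Spf (p F : ℝ) : Set (Matrix (Fin 2 × Fin 2) (Fin 2 × Fin 2) ℂ) :=
  {ρ | (∃ σ : Matrix (Fin 2 × Fin 2) (Fin 2 × Fin 2) ℂ, IsDensity σ ∧
      ρ = (p : ℂ) • bproj 0 0 + ((1 - p : ℝ) : ℂ) • σ) ∧
    braket2 (bell 0 0) ρ (bell 0 0) = (F : ℂ)}


lemma diag_nn {n : Type*} [Fintype n] [DecidableEq n] {M : Matrix n n ℂ} (h : M.PosSemidef) (i : n) : 0 ≤ M i i := by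
  exact h.diag_nonneg

lemma tr_nn {n : Type*} [Fintype n] [DecidableEq n] {M : Matrix n n ℂ} (h : M.PosSemidef) : 0 ≤ M.trace :=
  Finset.sum_nonneg fun i _ => diag_nn h i

open scoped MatrixOrder in
lemma tr_mul_nn {n : Type*} [Fintype n] [DecidableEq n] {A B : Matrix n n ℂ} (hA : A.PosSemidef) (hB : B.PosSemidef) : 0 ≤ (A * B).trace := by
  have hS : (CFC.sqrt A).PosSemidef := (CFC.sqrt_nonneg A).posSemidef
  have h := hB.conjTranspose_mul_mul_same (B := CFC.sqrt A)
  rw [hS.isHermitian.eq] at h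
  have := tr_nn h
  rwa [Matrix.trace_mul_cycle, CFC.sqrt_mul_sqrt_self A hA.nonneg] at this

lemma det_nn {n : Type*} [Fintype n] [DecidableEq n] {M : Matrix n n ℂ} (h : M.PosSemidef) : 0 ≤ M.det := by
  rw [h.1.det_eq_prod_eigenvalues]
  norm_cast
  exact Complex.zero_le_real.mpr (Finset.prod_nonneg fun i _ => h.eigenvalues_nonneg i)

lemma bell_zero : bell 0 0 = bell00 := by
  simp [bell, PX, PZ, Matrix.one_kronecker_one, Matrix.one_mulVec]

lemma hc : ((1/Real.sqrt 2 : ℝ):ℂ) * ((1/Real.sqrt 2 : ℝ):ℂ) = 1/2 := by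
  rw [← Complex.ofReal_mul]
  rw [show (1/Real.sqrt 2) * (1/Real.sqrt 2) = 1/2 by
    rw [div_mul_div_comm, Real.mul_self_sqrt two_pos.le]; norm_num]
  norm_num

lemma hc' : (((Real.sqrt 2 : ℝ)):ℂ)⁻¹ * ((Real.sqrt 2 : ℝ):ℂ)⁻¹ = 1/2 := by
  rw [← mul_inv, ← Complex.ofReal_mul, Real.mul_self_sqrt two_pos.le]
  norm_num

lemma bproj00 (x y : Fin 2 × Fin 2) :
    bproj 0 0 x y = if x.1 = x.2 ∧ y.1 = y.2 then (1/2:ℂ) else 0 := by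
  rw [bproj, bell_zero]
  simp only [Matrix.vecMulVec_apply, Pi.star_apply, bell00]
  split_ifs with h1 h2 h3 <;> simp_all [Complex.star_def]
  rw [hc']; norm_num

lemma swapProj00 (M : Matrix ((Fin 2 × Fin 2) × (Fin 2 × Fin 2)) ((Fin 2 × Fin 2) × (Fin 2 × Fin 2)) ℂ) (p q : Fin 2 × Fin 2) :
    swapProj bell00 M p q = (1/2) * ∑ a, ∑ a', M ((p.1,a),(a,p.2)) ((q.1,a'),(a',q.2)) := by
  simp only [swapProj, bell00, Fin.sum_univ_two, Complex.star_def, apply_ite (starRingEnd ℂ),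
    Complex.conj_ofReal, map_zero, ite_mul, mul_ite, mul_zero, zero_mul]
  norm_num
  linear_combination (M ((p.1,0),(0,p.2)) ((q.1,0),(0,q.2)) + M ((p.1,0),(0,p.2)) ((q.1,1),(1,q.2)) +
    M ((p.1,1),(1,p.2)) ((q.1,0),(0,q.2)) + M ((p.1,1),(1,p.2)) ((q.1,1),(1,q.2))) * hc'

lemma bell00_00 : bell00 0 = ((1/Real.sqrt 2 : ℝ):ℂ) := rfl
lemma bell00_11 : bell00 1 = ((1/Real.sqrt 2 : ℝ):ℂ) := rfl
lemma bell00_01 : bell00 (0,1) = 0 := by norm_num [bell00]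
lemma bell00_10 : bell00 (1,0) = 0 := by norm_num [bell00]

lemma swapNum00 (M : Matrix ((Fin 2 × Fin 2) × (Fin 2 × Fin 2)) ((Fin 2 × Fin 2) × (Fin 2 × Fin 2)) ℂ) :
    swapNum 0 0 M = (1/4) * ∑ b, ∑ a, ∑ b', ∑ a', M ((b,a),(a,b)) ((b',a'),(a',b')) := by
  simp only [swapNum, braket2, bell_zero, Matrix.mulVec, dotProduct,
    Fintype.sum_prod_type, swapProj00, Fin.sum_univ_two]
  norm_num [bell00, Complex.conj_ofReal, Complex.star_def]
  linear_combination (1/2) * (M 0 0 + M 0 ((0, 1), 1, 0) + M 0 ((1, 0), 0, 1) + M 0 1 + M ((0, 1), 1, 0) 0 + M ((0, 1), 1, 0) ((0, 1), 1, 0) + M ((0, 1), 1, 0) ((1, 0), 0, 1) + M ((0, 1), 1, 0) 1 + M ((1, 0), 0, 1) 0 + M ((1, 0), 0, 1) ((0, 1), 1, 0) + M ((1, 0), 0, 1) ((1, 0), 0, 1) + M ((1, 0), 0, 1) 1 + M 1 0 + M 1 ((0, 1), 1, 0) + M 1 ((1, 0), 0, 1) + M 1 1) * hc'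

lemma swapProb00 (M : Matrix ((Fin 2 × Fin 2) × (Fin 2 × Fin 2)) ((Fin 2 × Fin 2) × (Fin 2 × Fin 2)) ℂ) :
    swapProb 0 0 M = (1/2) * ∑ p1, ∑ p2, ∑ a, ∑ a', M ((p1,a),(a,p2)) ((p1,a'),(a',p2)) := by
  simp only [swapProb, bell_zero, Matrix.trace, Matrix.diag_apply, Fintype.sum_prod_type,
    swapProj00, Fin.sum_univ_two]
  ring

def SN (A B : Matrix (Fin 2 × Fin 2) (Fin 2 × Fin 2) ℂ) : ℂ :=
  ∑ b, ∑ a, ∑ b', ∑ a', A (b,a) (b',a') * B (a,b) (a',b')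

def SPd (A B : Matrix (Fin 2 × Fin 2) (Fin 2 × Fin 2) ℂ) : ℂ :=
  ∑ p1, ∑ p2, ∑ a, ∑ a', A (p1,a) (p1,a') * B (a,p2) (a',p2)

def G (σ : Matrix (Fin 2 × Fin 2) (Fin 2 × Fin 2) ℂ) : ℂ := ∑ a, ∑ a', σ (a,a) (a',a')

lemma swapNum_kron (ρ₁ ρ₂ : Matrix (Fin 2 × Fin 2) (Fin 2 × Fin 2) ℂ) :
    swapNum 0 0 (ρ₁ ⊗ₖ ρ₂) = (1/4) * SN ρ₁ ρ₂ := by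
  rw [swapNum00, SN]; rfl

lemma swapProb_kron (ρ₁ ρ₂ : Matrix (Fin 2 × Fin 2) (Fin 2 × Fin 2) ℂ) :
    swapProb 0 0 (ρ₁ ⊗ₖ ρ₂) = (1/2) * SPd ρ₁ ρ₂ := by
  rw [swapProb00, SPd]; rfl

lemma SN_bilin (x x' y y' : ℂ) (A A' B B' : Matrix (Fin 2 × Fin 2) (Fin 2 × Fin 2) ℂ) :
    SN (x•A + x'•A') (y•B + y'•B') =
      x*y*SN A B + x*y'*SN A B' + x'*y*SN A' B + x'*y'*SN A' B' := by
  simp only [SN, Matrix.add_apply, Matrix.smul_apply, smul_eq_mul, Fin.sum_univ_two]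
  ring

lemma SP_bilin (x x' y y' : ℂ) (A A' B B' : Matrix (Fin 2 × Fin 2) (Fin 2 × Fin 2) ℂ) :
    SPd (x•A + x'•A') (y•B + y'•B') =
      x*y*SPd A B + x*y'*SPd A B' + x'*y*SPd A' B + x'*y'*SPd A' B' := by
  simp only [SPd, Matrix.add_apply, Matrix.smul_apply, smul_eq_mul, Fin.sum_univ_two]
  ring

lemma SN_PP : SN (bproj 0 0) (bproj 0 0) = 1 := by
  simp only [SN, bproj00, Fin.sum_univ_two]
  norm_num

lemma SN_Ps (σ : Matrix (Fin 2 × Fin 2) (Fin 2 × Fin 2) ℂ) : SN (bproj 0 0) σ = (1/2) * G σ := by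
  simp only [SN, G, bproj00, Fin.sum_univ_two]
  norm_num; ring

lemma SN_sP (σ : Matrix (Fin 2 × Fin 2) (Fin 2 × Fin 2) ℂ) : SN σ (bproj 0 0) = (1/2) * G σ := by
  simp only [SN, G, bproj00, Fin.sum_univ_two]
  norm_num; ring

lemma SP_PP : SPd (bproj 0 0) (bproj 0 0) = 1/2 := by
  simp only [SPd, bproj00, Fin.sum_univ_two]
  norm_num

lemma SP_Ps (σ : Matrix (Fin 2 × Fin 2) (Fin 2 × Fin 2) ℂ) : SPd (bproj 0 0) σ = (1/2) * σ.trace := by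
  simp only [SPd, bproj00, Matrix.trace, Matrix.diag_apply, Fintype.sum_prod_type, Fin.sum_univ_two]
  norm_num; ring

lemma SP_sP (σ : Matrix (Fin 2 × Fin 2) (Fin 2 × Fin 2) ℂ) : SPd σ (bproj 0 0) = (1/2) * σ.trace := by
  simp only [SPd, bproj00, Matrix.trace, Matrix.diag_apply, Fintype.sum_prod_type, Fin.sum_univ_two]
  norm_num; ring

lemma braketG (ρ : Matrix (Fin 2 × Fin 2) (Fin 2 × Fin 2) ℂ) :
    braket2 (bell 0 0) ρ (bell 0 0) = (1/2) * G ρ := by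
  simp only [braket2, bell_zero, dotProduct, Matrix.mulVec, G, Fintype.sum_prod_type,
    Fin.sum_univ_two]
  norm_num [bell00, Complex.conj_ofReal, Complex.star_def]
  linear_combination (ρ 0 0 + ρ 0 1 + ρ 1 0 + ρ 1 1) * hc'

lemma SN_nonneg {σ₁ σ₂ : Matrix (Fin 2 × Fin 2) (Fin 2 × Fin 2) ℂ}
    (h₁ : σ₁.PosSemidef) (h₂ : σ₂.PosSemidef) : 0 ≤ SN σ₁ σ₂ := by
  have hC : (σ₂.submatrix Prod.swap Prod.swap).PosSemidef := h₂.submatrix Prod.swap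
  have heq : SN σ₁ σ₂ = (σ₁ * (σ₂.submatrix Prod.swap Prod.swap)ᵀ).trace := by
    simp only [SN, Matrix.trace, Matrix.diag_apply, Matrix.mul_apply, Matrix.transpose_apply,
      Matrix.submatrix_apply, Prod.swap_prod_mk, Fintype.sum_prod_type, Fin.sum_univ_two]
  rw [heq]
  exact tr_mul_nn h₁ hC.transpose

lemma tau1_psd (σ : Matrix (Fin 2 × Fin 2) (Fin 2 × Fin 2) ℂ) (h : σ.PosSemidef) :
    (Matrix.of fun a a' : Fin 2 => ∑ p, σ (p,a) (p,a')).PosSemidef := by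
  classical
  set E : Fin 2 → Matrix (Fin 2 × Fin 2) (Fin 2) ℂ :=
    fun p => Matrix.of fun x b => if x = (p, b) then (1:ℂ) else 0 with hE
  have h2 := (h.conjTranspose_mul_mul_same (E 0)).add (h.conjTranspose_mul_mul_same (E 1))
  have heq : (Matrix.of fun a a' : Fin 2 => ∑ p, σ (p,a) (p,a'))
      = (E 0)ᴴ * σ * (E 0) + (E 1)ᴴ * σ * (E 1) := by
    ext a a'
    fin_cases a <;> fin_cases a' <;>
      simp [hE, Matrix.mul_apply, Matrix.conjTranspose_apply, Fintype.sum_prod_type,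
        Fin.sum_univ_two, Prod.ext_iff]
  rw [heq]; exact h2

lemma tau2_psd (σ : Matrix (Fin 2 × Fin 2) (Fin 2 × Fin 2) ℂ) (h : σ.PosSemidef) :
    (Matrix.of fun a a' : Fin 2 => ∑ p, σ (a,p) (a',p)).PosSemidef := by
  classical
  set E : Fin 2 → Matrix (Fin 2 × Fin 2) (Fin 2) ℂ :=
    fun p => Matrix.of fun x b => if x = (b, p) then (1:ℂ) else 0 with hE
  have h2 := (h.conjTranspose_mul_mul_same (E 0)).add (h.conjTranspose_mul_mul_same (E 1))
  have heq : (Matrix.of fun a a' : Fin 2 => ∑ p, σ (a,p) (a',p))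
      = (E 0)ᴴ * σ * (E 0) + (E 1)ᴴ * σ * (E 1) := by
    ext a a'
    fin_cases a <;> fin_cases a' <;>
      simp [hE, Matrix.mul_apply, Matrix.conjTranspose_apply, Fintype.sum_prod_type,
        Fin.sum_univ_two, Prod.ext_iff]
  rw [heq]; exact h2

lemma real_key (a1 d1 a2 d2 r1 s1 r2 s2 : ℝ) (ha1 : 0 ≤ a1) (hd1' : 0 ≤ d1) (ha2 : 0 ≤ a2)
    (hd2' : 0 ≤ d2) (hb1 : r1^2 + s1^2 ≤ a1*d1) (hb2 : r2^2 + s2^2 ≤ a2*d2)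
    (h1 : a1 + d1 = 1) (h2 : a2 + d2 = 1) :
    a1*a2 + d1*d2 + 2*(r1*r2 - s1*s2) ≤ 1 := by
  have h3 : (r1*r2 - s1*s2)^2 ≤ (a1*d2) * (d1*a2) := by
    nlinarith [sq_nonneg (r1*s2 + s1*r2),
      mul_le_mul hb1 hb2 (by positivity) (mul_nonneg ha1 hd1')]
  have hxy : 0 ≤ a1*d2 + d1*a2 := by positivity
  have h4 : (2*(r1*r2 - s1*s2))^2 ≤ (a1*d2 + d1*a2)^2 := by
    nlinarith [h3, sq_nonneg (a1*d2 - d1*a2)]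
  have key : 2*(r1*r2 - s1*s2) ≤ a1*d2 + d1*a2 := by nlinarith [h4, hxy]
  nlinarith [key]

lemma SP_pos_le {σ₁ σ₂ : Matrix (Fin 2 × Fin 2) (Fin 2 × Fin 2) ℂ}
    (h₁ : IsDensity σ₁) (h₂ : IsDensity σ₂) : 0 ≤ SPd σ₁ σ₂ ∧ (SPd σ₁ σ₂).re ≤ 1 := by
  obtain ⟨τ₁, hτ₁⟩ : ∃ τ : Matrix (Fin 2) (Fin 2) ℂ,
      τ = Matrix.of fun a a' : Fin 2 => ∑ p, σ₁ (p,a) (p,a') := ⟨_, rfl⟩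
  obtain ⟨τ₂, hτ₂⟩ : ∃ τ : Matrix (Fin 2) (Fin 2) ℂ,
      τ = Matrix.of fun a a' : Fin 2 => ∑ p, σ₂ (a,p) (a',p) := ⟨_, rfl⟩
  have hp₁ : τ₁.PosSemidef := hτ₁ ▸ tau1_psd σ₁ h₁.1
  have hp₂ : τ₂.PosSemidef := hτ₂ ▸ tau2_psd σ₂ h₂.1
  have htr₁ : τ₁ 0 0 + τ₁ 1 1 = 1 := by
    have h := h₁.2
    simp only [Matrix.trace, Matrix.diag_apply, Fintype.sum_prod_type, Fin.sum_univ_two] at h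
    simp only [hτ₁, Matrix.of_apply, Fin.sum_univ_two]
    linear_combination h
  have htr₂ : τ₂ 0 0 + τ₂ 1 1 = 1 := by
    have h := h₂.2
    simp only [Matrix.trace, Matrix.diag_apply, Fintype.sum_prod_type, Fin.sum_univ_two] at h
    simp only [hτ₂, Matrix.of_apply, Fin.sum_univ_two]
    linear_combination h
  have hSP : SPd σ₁ σ₂ = τ₁ 0 0 * τ₂ 0 0 + τ₁ 0 1 * τ₂ 0 1 + τ₁ 1 0 * τ₂ 1 0 + τ₁ 1 1 * τ₂ 1 1 := by
    simp only [SPd, hτ₁, hτ₂, Matrix.of_apply, Fin.sum_univ_two]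
    ring
  clear hτ₁ hτ₂
  constructor
  · have heq : SPd σ₁ σ₂ = (τ₁ * τ₂ᵀ).trace := by
      rw [hSP]
      simp only [Matrix.trace, Matrix.diag_apply, Matrix.mul_apply, Matrix.transpose_apply,
        Fin.sum_univ_two]
      ring
    rw [heq]; exact tr_mul_nn hp₁ hp₂.transpose
  · have d100 := Complex.nonneg_iff.mp (diag_nn hp₁ 0)
    have d111 := Complex.nonneg_iff.mp (diag_nn hp₁ 1)
    have d200 := Complex.nonneg_iff.mp (diag_nn hp₂ 0)
    have d211 := Complex.nonneg_iff.mp (diag_nn hp₂ 1)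
    have hh₁ : τ₁ 1 0 = starRingEnd ℂ (τ₁ 0 1) := (hp₁.1.apply 1 0).symm
    have hh₂ : τ₂ 1 0 = starRingEnd ℂ (τ₂ 0 1) := (hp₂.1.apply 1 0).symm
    have hdet₁ := Complex.nonneg_iff.mp (det_nn hp₁)
    have hdet₂ := Complex.nonneg_iff.mp (det_nn hp₂)
    rw [Matrix.det_fin_two, hh₁] at hdet₁
    rw [Matrix.det_fin_two, hh₂] at hdet₂
    have htr₁re : (τ₁ 0 0).re + (τ₁ 1 1).re = 1 := by
      have := congrArg Complex.re htr₁; simpa using this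
    have htr₂re : (τ₂ 0 0).re + (τ₂ 1 1).re = 1 := by
      have := congrArg Complex.re htr₂; simpa using this
    have hb1 : (τ₁ 0 1).re^2 + (τ₁ 0 1).im^2 ≤ (τ₁ 0 0).re * (τ₁ 1 1).re := by
      have h := hdet₁.1
      simp only [Complex.sub_re, Complex.mul_re, Complex.conj_re, Complex.conj_im] at h
      nlinarith [d100.2, d111.2, h]
    have hb2 : (τ₂ 0 1).re^2 + (τ₂ 0 1).im^2 ≤ (τ₂ 0 0).re * (τ₂ 1 1).re := by
      have h := hdet₂.1
      simp only [Complex.sub_re, Complex.mul_re, Complex.conj_re, Complex.conj_im] at h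
      nlinarith [d200.2, d211.2, h]
    have expand : (SPd σ₁ σ₂).re
        = (τ₁ 0 0).re*(τ₂ 0 0).re + (τ₁ 1 1).re*(τ₂ 1 1).re
          + 2*((τ₁ 0 1).re*(τ₂ 0 1).re - (τ₁ 0 1).im*(τ₂ 0 1).im) := by
      rw [hSP, hh₁, hh₂]
      simp only [Complex.add_re, Complex.mul_re, Complex.conj_re, Complex.conj_im,
        ← d100.2, ← d111.2, ← d200.2, ← d211.2]
      ring
    rw [expand]
    exact real_key _ _ _ _ _ _ _ _ d100.1 d111.1 d200.1 d211.1 hb1 hb2 htr₁re htr₂re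

lemma G_lin (x y : ℂ) (A B : Matrix (Fin 2 × Fin 2) (Fin 2 × Fin 2) ℂ) :
    G (x•A + y•B) = x * G A + y * G B := by
  simp only [G, Matrix.add_apply, Matrix.smul_apply, smul_eq_mul, Fin.sum_univ_two]
  ring

lemma G_P : G (bproj 0 0) = 2 := by
  simp only [G, bproj00, Fin.sum_univ_two]
  norm_num

lemma complex_real_of_im (z : ℂ) (h : z.im = 0) : z = (z.re : ℂ) := by
  apply Complex.ext <;> simp [h]


/-- Lower bound on the postselected swap fidelity: for ρ_k ∈ S_{p_k,F_k},
F'₀₀(ρ₁⊗ρ₂) ≥ (p₁F₂ + p₂F₁ − p₁p₂)/(1 + (1−p₁)(1−p₂)); in particular for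
ρ₁, ρ₂ ∈ S_{p,F}, F'₀₀ ≥ p(2F−p)/(1 + (1−p)²). -/
theorem swap_fidelity_lower_bound (p₁ F₁ p₂ F₂ : ℝ)
    (hp₁ : 0 ≤ p₁) (hpF₁ : p₁ ≤ F₁) (hF₁ : F₁ ≤ 1)
    (hp₂ : 0 ≤ p₂) (hpF₂ : p₂ ≤ F₂) (hF₂ : F₂ ≤ 1)
    (ρ₁ ρ₂ : Matrix (Fin 2 × Fin 2) (Fin 2 × Fin 2) ℂ)
    (hρ₁ : ρ₁ ∈ Spf p₁ F₁) (hρ₂ : ρ₂ ∈ Spf p₂ F₂) :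
    (p₁ * F₂ + p₂ * F₁ - p₁ * p₂) / (1 + (1 - p₁) * (1 - p₂)) ≤
      (swapFid 0 0 (ρ₁ ⊗ₖ ρ₂)).re ∧
    (p₁ = p₂ → F₁ = F₂ →
      p₁ * (2 * F₁ - p₁) / (1 + (1 - p₁) ^ 2) ≤ (swapFid 0 0 (ρ₁ ⊗ₖ ρ₂)).re) := by
  obtain ⟨⟨σ₁, hσ₁, hd₁⟩, hF₁e⟩ := hρ₁
  obtain ⟨⟨σ₂, hσ₂, hd₂⟩, hF₂e⟩ := hρ₂
  have hG₁ : ((1:ℂ) - (p₁:ℂ)) * G σ₁ = 2 * (F₁ : ℂ) - 2 * (p₁ : ℂ) := by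
    have h := hF₁e
    rw [hd₁, braketG, G_lin, G_P] at h
    push_cast at h
    linear_combination 2 * h
  have hG₂ : ((1:ℂ) - (p₂:ℂ)) * G σ₂ = 2 * (F₂ : ℂ) - 2 * (p₂ : ℂ) := by
    have h := hF₂e
    rw [hd₂, braketG, G_lin, G_P] at h
    push_cast at h
    linear_combination 2 * h
  obtain ⟨hn0', hnim⟩ := Complex.nonneg_iff.mp (SN_nonneg hσ₁.1 hσ₂.1)
  obtain ⟨ht0'', htle'⟩ := SP_pos_le hσ₁ hσ₂
  obtain ⟨ht0', htim⟩ := Complex.nonneg_iff.mp ht0''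
  have hn' : SN σ₁ σ₂ = ((SN σ₁ σ₂).re : ℂ) := complex_real_of_im _ hnim.symm
  have ht' : SPd σ₁ σ₂ = ((SPd σ₁ σ₂).re : ℂ) := complex_real_of_im _ htim.symm
  obtain ⟨nr, hnreq⟩ : ∃ r : ℝ, (SN σ₁ σ₂).re = r := ⟨_, rfl⟩
  obtain ⟨tr, htreq⟩ : ∃ r : ℝ, (SPd σ₁ σ₂).re = r := ⟨_, rfl⟩
  rw [hnreq] at hn' hn0'
  rw [htreq] at ht' ht0' htle'
  have hn0 : 0 ≤ nr := hn0'
  have ht0 : 0 ≤ tr := ht0'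
  have htle : tr ≤ 1 := htle'
  have hN : swapNum 0 0 (ρ₁ ⊗ₖ ρ₂)
      = (((p₁*F₂ + p₂*F₁ - p₁*p₂)/4 + (1-p₁)*(1-p₂)/4 * nr : ℝ) : ℂ) := by
    rw [hd₁, hd₂, swapNum_kron, SN_bilin, SN_PP, SN_Ps, SN_sP, hn']
    push_cast
    linear_combination ((p₁:ℂ)/8) * hG₂ + ((p₂:ℂ)/8) * hG₁
  have hD : swapProb 0 0 (ρ₁ ⊗ₖ ρ₂)
      = (((p₁ + p₂ - p₁*p₂)/4 + (1-p₁)*(1-p₂)/2 * tr : ℝ) : ℂ) := by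
    rw [hd₁, hd₂, swapProb_kron, SP_bilin, SP_PP, SP_Ps, SP_sP, hσ₁.2, hσ₂.2, ht']
    push_cast
    ring
  have hfid : (swapFid 0 0 (ρ₁ ⊗ₖ ρ₂)).re
      = ((p₁*F₂ + p₂*F₁ - p₁*p₂)/4 + (1-p₁)*(1-p₂)/4 * nr)
        / ((p₁ + p₂ - p₁*p₂)/4 + (1-p₁)*(1-p₂)/2 * tr) := by
    rw [swapFid, hN, hD, ← Complex.ofReal_div, Complex.ofReal_re]
  rw [hfid]
  clear hfid hN hD hn' ht' hG₁ hG₂ hF₁e hF₂e hd₁ hd₂ hσ₁ hσ₂ hnim htim ht0'' hnreq htreq hn0' ht0' htle'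
  clear σ₁ σ₂ ρ₁ ρ₂
  have hq₁ : 0 ≤ 1 - p₁ := by linarith
  have hq₂ : 0 ≤ 1 - p₂ := by linarith
  have hqq : 0 ≤ (1-p₁)*(1-p₂) := mul_nonneg hq₁ hq₂
  have hA : 0 ≤ p₁*F₂ + p₂*F₁ - p₁*p₂ := by nlinarith
  have hNr0 : 0 ≤ (p₁*F₂ + p₂*F₁ - p₁*p₂)/4 + (1-p₁)*(1-p₂)/4 * nr := by
    nlinarith [mul_nonneg hqq hn0]
  have hDr0 : 0 ≤ (p₁ + p₂ - p₁*p₂)/4 + (1-p₁)*(1-p₂)/2 * tr := by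
    nlinarith [mul_nonneg hqq ht0]
  have hDle : (p₁ + p₂ - p₁*p₂)/4 + (1-p₁)*(1-p₂)/2 * tr ≤ (1 + (1-p₁)*(1-p₂))/4 := by
    nlinarith [mul_nonneg hqq (sub_nonneg.mpr htle)]
  have hB : (0:ℝ) < 1 + (1-p₁)*(1-p₂) := by nlinarith
  have main : (p₁ * F₂ + p₂ * F₁ - p₁ * p₂) / (1 + (1 - p₁) * (1 - p₂)) ≤
      ((p₁*F₂ + p₂*F₁ - p₁*p₂)/4 + (1-p₁)*(1-p₂)/4 * nr)
        / ((p₁ + p₂ - p₁*p₂)/4 + (1-p₁)*(1-p₂)/2 * tr) := by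
    rcases eq_or_lt_of_le hDr0 with hD0 | hDpos
    · have h1 : p₁ + p₂ - p₁*p₂ = 0 := by
        nlinarith [mul_nonneg hqq ht0]
      have hp₁0 : p₁ = 0 := by nlinarith
      have hp₂0 : p₂ = 0 := by nlinarith
      rw [← hD0, div_zero, hp₁0, hp₂0]
      simp
    · have h1 : (p₁ * F₂ + p₂ * F₁ - p₁ * p₂) / (1 + (1 - p₁) * (1 - p₂))
          = ((p₁ * F₂ + p₂ * F₁ - p₁ * p₂)/4) / ((1 + (1 - p₁) * (1 - p₂))/4) := by
        rw [div_div_div_cancel_right₀] <;> norm_num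
      rw [h1]
      apply div_le_div₀ hNr0 _ hDpos hDle
      nlinarith [mul_nonneg hqq hn0]
  refine ⟨main, fun hpp hFF => ?_⟩
  have heq2 : p₁ * (2 * F₁ - p₁) / (1 + (1 - p₁) ^ 2)
      = (p₁ * F₂ + p₂ * F₁ - p₁ * p₂) / (1 + (1 - p₁) * (1 - p₂)) := by
    rw [← hpp, ← hFF]; ring_nf
  rw [heq2]; exact main
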